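/- ∫_{−ln 2}^{∞} (y·e^{2y} − (e^y − 1) + (e^y − 1)²·ln|e^y − 1|)·e^{−y}/(e^y − 1)² dy = 2. -/

import Mathlib

open MeasureTheory Filter Set

noncomputable def Hf (y : ℝ) : ℝ :=
  if y = 0 then -2 else -y / (Real.exp y - 1) - Real.exp (-y)

noncomputable def Kf (y : ℝ) : ℝ :=
  (1 - Real.exp (-y)) * Real.log (Real.exp y - 1) - y

noncomputable def g1 (y : ℝ) : ℝ :=
  (y * Real.exp y - (Real.exp y - 1)) / (Real.exp y - 1) ^ 2 + Real.exp (-y)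

noncomputable def g3 (y : ℝ) : ℝ :=
  Real.exp (-y) * Real.log (Real.exp y - 1)

lemma u_ne {y : ℝ} (hy : y ≠ 0) : Real.exp y - 1 ≠ 0 := by
  rw [sub_ne_zero]
  exact fun h => hy ((Real.exp_eq_one_iff y).1 h)

lemma hH {y : ℝ} (hy : y ≠ 0) : HasDerivAt Hf (g1 y) y := by
  have hu := u_ne hy
  have hder : HasDerivAt (fun y => -y / (Real.exp y - 1) - Real.exp (-y))
      ((-1 * (Real.exp y - 1) - -y * Real.exp y) / (Real.exp y - 1) ^ 2
        - Real.exp (-y) * -1) y := by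
    exact (((hasDerivAt_id y).neg.div ((Real.hasDerivAt_exp y).sub_const 1) hu)).sub
      ((hasDerivAt_id y).neg.exp)
  have heq : (-1 * (Real.exp y - 1) - -y * Real.exp y) / (Real.exp y - 1) ^ 2
      - Real.exp (-y) * -1 = g1 y := by
    unfold g1
    field_simp
    ring
  rw [heq] at hder
  apply hder.congr_of_eventuallyEq
  filter_upwards [isOpen_compl_singleton.mem_nhds hy] with x hx
  simp only [Hf, if_neg (by simpa using hx)]

lemma hK {y : ℝ} (hy : y ≠ 0) : HasDerivAt Kf (g3 y) y := by
  have hu := u_ne hy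
  have h1 : HasDerivAt (fun y => 1 - Real.exp (-y)) (-(Real.exp (-y) * -1)) y :=
    ((hasDerivAt_id y).neg.exp).const_sub 1
  have h2 : HasDerivAt (fun y => Real.log (Real.exp y - 1))
      (Real.exp y / (Real.exp y - 1)) y :=
    ((Real.hasDerivAt_exp y).sub_const 1).log hu
  have hder := ((h1.mul h2).sub (hasDerivAt_id y))
  have heq : -(Real.exp (-y) * -1) * Real.log (Real.exp y - 1)
      + (1 - Real.exp (-y)) * (Real.exp y / (Real.exp y - 1)) - 1 = g3 y := by
    unfold g3
    have h3 : (1 - Real.exp (-y)) * Real.exp y = Real.exp y - 1 := by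
      rw [Real.exp_neg]
      field_simp
    rw [mul_div_assoc'] at *
    rw [h3, div_self hu]
    ring
  rw [heq] at hder
  exact hder

lemma f_eq {y : ℝ} (hy : y ≠ 0) :
    (y * Real.exp (2 * y) - (Real.exp y - 1)
        + (Real.exp y - 1) ^ 2 * Real.log |Real.exp y - 1|)
      * Real.exp (-y) / (Real.exp y - 1) ^ 2 = g1 y + g3 y := by
  have hu := u_ne hy
  have he := Real.exp_ne_zero y
  unfold g1 g3
  rw [Real.log_abs, two_mul, Real.exp_add, Real.exp_neg]
  field_simp
  ring

lemma phi_nonneg (y : ℝ) : 0 ≤ y * (Real.exp y * Real.exp y) - Real.exp y + 1 := by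
  have h3 : Real.exp y * Real.exp (-y) = 1 := by rw [← Real.exp_add]; simp
  rcases le_or_gt 0 y with h | h
  · have h5 := mul_le_mul_of_nonneg_left (Real.add_one_le_exp (-y)) (Real.exp_pos y).le
    rw [h3] at h5
    have h1 : Real.exp y * (1 - y) ≤ 1 := by
      have : Real.exp y * (1 - y) = Real.exp y * (-y + 1) := by ring
      rw [this]; exact h5
    have h2 : 1 ≤ Real.exp y := Real.one_le_exp h
    have h6 := mul_le_mul_of_nonneg_left h2 (mul_nonneg h (Real.exp_pos y).le)
    nlinarith [Real.exp_pos y]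
  · have ht1 := Real.add_one_le_exp (-y)
    have ht2 : 1 ≤ Real.exp (-y) := Real.one_le_exp (by linarith)
    have h6 : Real.exp (-y) - 1 ≤ Real.exp (-y) * (Real.exp (-y) - 1) := by
      nlinarith
    have h7 : -y ≤ Real.exp (-y) * (Real.exp (-y) - 1) := by linarith
    have hEE : (Real.exp y * Real.exp y) * (Real.exp (-y) * (Real.exp (-y) - 1))
        = 1 - Real.exp y := by
      rw [Real.exp_neg]
      field_simp
    have h8 := mul_le_mul_of_nonneg_left h7 (mul_pos (Real.exp_pos y) (Real.exp_pos y)).le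
    rw [hEE] at h8
    nlinarith

lemma g1_nonneg (y : ℝ) : 0 ≤ g1 y := by
  rcases eq_or_ne y 0 with rfl | hy
  · simp [g1]
  · have hu := u_ne hy
    have key : g1 y = Real.exp (-y) * (y * (Real.exp y * Real.exp y) - Real.exp y + 1)
        / (Real.exp y - 1) ^ 2 := by
      unfold g1
      rw [Real.exp_neg]
      field_simp
      ring
    rw [key]
    apply div_nonneg (mul_nonneg (Real.exp_pos _).le (phi_nonneg y))
    positivity

lemma g3_nonpos {y : ℝ} (hy : y ≤ Real.log 2) : g3 y ≤ 0 := by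
  have habs : |Real.exp y - 1| ≤ 1 := by
    rw [abs_le]
    constructor
    · nlinarith [Real.exp_pos y]
    · have : Real.exp y ≤ 2 := by
        calc Real.exp y ≤ Real.exp (Real.log 2) := Real.exp_le_exp.2 hy
        _ = 2 := Real.exp_log two_pos
      linarith
  have hlog : Real.log (Real.exp y - 1) ≤ 0 := by
    rw [← Real.log_abs]
    exact Real.log_nonpos (abs_nonneg _) habs
  exact mul_nonpos_of_nonneg_of_nonpos (Real.exp_pos _).le hlog

lemma g3_nonneg {y : ℝ} (hy : Real.log 2 ≤ y) : 0 ≤ g3 y := by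
  have : (2:ℝ) ≤ Real.exp y := by
    calc (2:ℝ) = Real.exp (Real.log 2) := (Real.exp_log two_pos).symm
    _ ≤ Real.exp y := Real.exp_le_exp.2 hy
  exact mul_nonneg (Real.exp_pos _).le (Real.log_nonneg (by linarith))

lemma tendstoH0 : Tendsto Hf (nhdsWithin 0 {(0:ℝ)}ᶜ) (nhds (-2)) := by
  have hs : Tendsto (fun y => (Real.exp y - 1) / y) (nhdsWithin 0 {(0:ℝ)}ᶜ) (nhds 1) := by
    have := hasDerivAt_iff_tendsto_slope.1 (Real.hasDerivAt_exp 0)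
    simp only [Real.exp_zero] at this
    apply this.congr
    intro y
    rw [slope_def_field]
    simp
  have hinv : Tendsto (fun y => y / (Real.exp y - 1)) (nhdsWithin 0 {(0:ℝ)}ᶜ) (nhds 1) := by
    have := hs.inv₀ one_ne_zero
    rw [inv_one] at this
    apply this.congr
    intro y
    rw [inv_div]
  have hexp : Tendsto (fun y : ℝ => Real.exp (-y)) (nhdsWithin 0 {(0:ℝ)}ᶜ) (nhds 1) := by
    have : Tendsto (fun y : ℝ => Real.exp (-y)) (nhds 0) (nhds 1) := by
      have := (Real.continuous_exp.comp continuous_neg).tendsto 0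
      simpa [Function.comp_def] using this
    exact this.mono_left nhdsWithin_le_nhds
  have := (hinv.neg).sub hexp
  have h2 : (-(1:ℝ)) - 1 = -2 := by norm_num
  rw [h2] at this
  apply this.congr'
  filter_upwards [eventually_mem_nhdsWithin] with y (hy : y ∈ ({(0:ℝ)}ᶜ : Set ℝ))
  have hy' : y ≠ 0 := by simpa using hy
  simp only [Hf, if_neg hy', neg_div]

lemma contH : Continuous Hf := by
  rw [continuous_iff_continuousAt]
  intro x
  rcases eq_or_ne x 0 with rfl | hx
  · have h1 : Tendsto Hf (nhdsWithin 0 {(0:ℝ)}ᶜ ⊔ pure 0) (nhds (-2)) := by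
      rw [tendsto_sup]
      refine ⟨tendstoH0, ?_⟩
      have := tendsto_pure_nhds Hf 0
      simpa [Hf] using this
    rw [nhdsNE_sup_pure] at h1
    have h0 : Hf 0 = -2 := by simp [Hf]
    rw [ContinuousAt, h0]
    exact h1
  · exact (hH hx).continuousAt

lemma tlog : Tendsto (fun t : ℝ => Real.log t * t) (nhds 0) (nhds 0) := by
  have h1 : Tendsto (fun t : ℝ => Real.log t * t)
      (nhdsWithin 0 {(0:ℝ)}ᶜ ⊔ pure 0) (nhds 0) := by
    rw [tendsto_sup]
    constructor
    · rw [← nhdsLT_sup_nhdsGT (0:ℝ), tendsto_sup]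
      constructor
      · exact tendsto_log_mul_self_nhdsLT_zero
      · have := tendsto_log_mul_rpow_nhdsGT_zero zero_lt_one
        apply this.congr'
        filter_upwards [self_mem_nhdsWithin] with x (hx : (0:ℝ) < x)
        rw [Real.rpow_one]
    · have := tendsto_pure_nhds (fun t : ℝ => Real.log t * t) 0
      simpa using this
  rwa [nhdsNE_sup_pure] at h1

lemma Kf_eq (y : ℝ) : Kf y
    = Real.exp (-y) * (Real.log (Real.exp y - 1) * (Real.exp y - 1)) - y := by
  unfold Kf
  rw [Real.exp_neg]
  have he := Real.exp_ne_zero y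
  field_simp

lemma contK : Continuous Kf := by
  rw [continuous_iff_continuousAt]
  intro x
  rcases eq_or_ne x 0 with rfl | hx
  · have hc : Tendsto (fun y : ℝ => Real.exp y - 1) (nhds 0) (nhds 0) := by
      have hcc : Continuous fun y : ℝ => Real.exp y - 1 := by continuity
      have := hcc.tendsto 0
      simpa using this
    have hcomp : Tendsto (fun y : ℝ => Real.log (Real.exp y - 1) * (Real.exp y - 1))
        (nhds 0) (nhds 0) := tlog.comp hc
    have hexp : Tendsto (fun y : ℝ => Real.exp (-y)) (nhds 0) (nhds 1) := by
      have hcc : Continuous fun y : ℝ => Real.exp (-y) := by continuity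
      have := hcc.tendsto 0
      simpa using this
    have hid : Tendsto (fun y : ℝ => y) (nhds (0:ℝ)) (nhds 0) := continuous_id.tendsto 0
    have hall := (hexp.mul hcomp).sub hid
    rw [ContinuousAt]
    have h0 : Kf 0 = 0 := by simp [Kf]
    rw [h0]
    have heq : (fun y : ℝ => Real.exp (-y) * (Real.log (Real.exp y - 1) * (Real.exp y - 1)) - y)
        = Kf := by
      ext y; rw [Kf_eq]
    rw [← heq]
    simpa using hall
  · exact (hK hx).continuousAt

lemma tendH_top : Tendsto Hf atTop (nhds 0) := by
  have h1 : Tendsto (fun y : ℝ => y * Real.exp (-y)) atTop (nhds 0) := by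
    simpa using Real.tendsto_pow_mul_exp_neg_atTop_nhds_zero 1
  have h2 : Tendsto (fun y : ℝ => 1 - Real.exp (-y)) atTop (nhds 1) := by
    have := Real.tendsto_exp_neg_atTop_nhds_zero.const_sub 1
    simpa using this
  have h3 := h1.div h2 one_ne_zero
  rw [zero_div] at h3
  have h4 := (h3.neg).sub Real.tendsto_exp_neg_atTop_nhds_zero
  rw [neg_zero, sub_zero] at h4
  apply h4.congr'
  filter_upwards [Ioi_mem_atTop (0:ℝ)] with y (hy : 0 < y)
  have hy' : y ≠ 0 := hy.ne'
  have hu := u_ne hy'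
  have he := Real.exp_ne_zero y
  have hlt : Real.exp (-y) < 1 := by
    rw [show (1:ℝ) = Real.exp 0 by simp]
    exact Real.exp_lt_exp.2 (by linarith)
  have hne : (1:ℝ) - (Real.exp y)⁻¹ ≠ 0 := by
    rw [← Real.exp_neg]; intro h; linarith
  have key : y * Real.exp (-y) / (1 - Real.exp (-y)) = y / (Real.exp y - 1) := by
    rw [Real.exp_neg]
    field_simp
  simp only [Pi.div_apply]
  simp only [Hf, if_neg hy', neg_div]
  rw [key]

lemma tendK_top : Tendsto Kf atTop (nhds 0) := by
  have h1 : Tendsto (fun y : ℝ => y * Real.exp (-y)) atTop (nhds 0) := by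
    simpa using Real.tendsto_pow_mul_exp_neg_atTop_nhds_zero 1
  have h2 : Tendsto (fun y : ℝ => 1 - Real.exp (-y)) atTop (nhds 1) := by
    have := Real.tendsto_exp_neg_atTop_nhds_zero.const_sub 1
    simpa using this
  have hL : Tendsto (fun y : ℝ => Real.log (1 - Real.exp (-y))) atTop (nhds 0) := by
    have hc : ContinuousAt Real.log 1 := Real.continuousAt_log one_ne_zero
    have := hc.tendsto.comp h2
    simpa [Function.comp_def] using this
  have h5 := (hL.sub h1).sub (Real.tendsto_exp_neg_atTop_nhds_zero.mul hL)
  have h6 : ((0:ℝ) - 0) - 0 * 0 = 0 := by norm_num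
  rw [h6] at h5
  apply h5.congr'
  filter_upwards [Ioi_mem_atTop (0:ℝ)] with y (hy : 0 < y)
  have hlt : Real.exp (-y) < 1 := by
    rw [show (1:ℝ) = Real.exp 0 by simp]
    exact Real.exp_lt_exp.2 (by linarith)
  have hpos : 0 < 1 - Real.exp (-y) := by linarith
  have hsplit : Real.log (Real.exp y - 1) = y + Real.log (1 - Real.exp (-y)) := by
    have : Real.exp y - 1 = Real.exp y * (1 - Real.exp (-y)) := by
      rw [Real.exp_neg]
      field_simp
    rw [this, Real.log_mul (Real.exp_ne_zero y) hpos.ne', Real.log_exp]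
  unfold Kf
  rw [hsplit]
  ring

theorem stmt_13 :
    ∫ y in Set.Ioi (-Real.log 2),
      (y * Real.exp (2 * y) - (Real.exp y - 1)
          + (Real.exp y - 1) ^ 2 * Real.log |Real.exp y - 1|)
        * Real.exp (-y) / (Real.exp y - 1) ^ 2 = 2 := by
  have hlog2 : 0 < Real.log 2 := Real.log_pos one_lt_two
  set a : ℝ := -Real.log 2 with ha_def
  have ha : a < 0 := by simpa [ha_def] using hlog2
  have ha0 : a ≤ 0 := ha.le
  set f : ℝ → ℝ := fun y =>
    (y * Real.exp (2 * y) - (Real.exp y - 1)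
        + (Real.exp y - 1) ^ 2 * Real.log |Real.exp y - 1|)
      * Real.exp (-y) / (Real.exp y - 1) ^ 2 with hf_def
  -- integrability pieces
  have int_g1_left : IntegrableOn g1 (Ioc a 0) :=
    intervalIntegral.integrableOn_deriv_of_nonneg contH.continuousOn
      (fun x hx => hH hx.2.ne) (fun x _ => g1_nonneg x)
  have int_g3_left : IntegrableOn g3 (Ioc a 0) := by
    have h := intervalIntegral.integrableOn_deriv_of_nonneg (g := fun y => -Kf y)
      (g' := fun y => -g3 y) (a := a) (b := 0) (contK.neg.continuousOn)
      (fun x hx => (hK hx.2.ne).neg)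
      (fun x hx => neg_nonneg.2 (g3_nonpos (le_of_lt (lt_of_lt_of_le hx.2 hlog2.le))))
    have h2 : IntegrableOn (fun y => - -g3 y) (Ioc a 0) volume := h.neg
    simpa only [neg_neg] using h2
  have int_g1_right : IntegrableOn g1 (Ioi 0) :=
    integrableOn_Ioi_deriv_of_nonneg contH.continuousWithinAt
      (fun x hx => hH (ne_of_gt hx)) (fun x _ => g1_nonneg x) tendH_top
  have int_g3_mid : IntegrableOn g3 (Ioc 0 (Real.log 2)) := by
    have h := intervalIntegral.integrableOn_deriv_of_nonneg (g := fun y => -Kf y)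
      (g' := fun y => -g3 y) (a := 0) (b := Real.log 2) (contK.neg.continuousOn)
      (fun x hx => (hK (ne_of_gt hx.1)).neg)
      (fun x hx => neg_nonneg.2 (g3_nonpos hx.2.le))
    have h2 : IntegrableOn (fun y => - -g3 y) (Ioc 0 (Real.log 2)) volume := h.neg
    simpa only [neg_neg] using h2
  have int_g3_far : IntegrableOn g3 (Ioi (Real.log 2)) :=
    integrableOn_Ioi_deriv_of_nonneg contK.continuousWithinAt
      (fun x hx => hK (ne_of_gt (lt_trans hlog2 hx)))
      (fun x hx => g3_nonneg (le_of_lt hx)) tendK_top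
  have int_g3_right : IntegrableOn g3 (Ioi 0) := by
    have := int_g3_mid.union int_g3_far
    rwa [Ioc_union_Ioi_eq_Ioi hlog2.le] at this
  -- a.e. equality of f with g1 + g3
  have hae : ∀ᵐ y : ℝ, y ≠ 0 := by
    rw [MeasureTheory.ae_iff]
    have : {y : ℝ | ¬ y ≠ 0} = {0} := by ext y; simp
    rw [this]
    exact measure_singleton 0
  have intf_left : IntegrableOn f (Ioc a 0) := by
    apply (int_g1_left.add int_g3_left).congr
    apply ae_restrict_of_ae
    filter_upwards [hae] with y hy
    exact (f_eq hy).symm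
  have intf_right : IntegrableOn f (Ioi 0) := by
    apply (int_g1_right.add int_g3_right).congr
    apply ae_restrict_of_ae
    filter_upwards [hae] with y hy
    exact (f_eq hy).symm
  -- split integral
  have hsplit : Ioc a 0 ∪ Ioi (0:ℝ) = Ioi a := Ioc_union_Ioi_eq_Ioi ha0
  have hdisj : Disjoint (Ioc a 0) (Ioi (0:ℝ)) := Ioc_disjoint_Ioi le_rfl
  rw [show Set.Ioi (-Real.log 2) = Ioi a from rfl, ← hsplit,
    setIntegral_union hdisj measurableSet_Ioi intf_left intf_right]
  -- values of antiderivative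
  have Hf0 : Hf 0 = -2 := by simp [Hf]
  have Kf0 : Kf 0 = 0 := by simp [Kf]
  have hexpa : Real.exp a = 2⁻¹ := by
    rw [ha_def, Real.exp_neg, Real.exp_log two_pos]
  have hexpna : Real.exp (-a) = 2 := by
    rw [ha_def, neg_neg, Real.exp_log two_pos]
  have Hfa : Hf a = -2 * Real.log 2 - 2 := by
    rw [Hf, if_neg ha.ne, hexpa, hexpna, ha_def]
    norm_num
    ring
  have Kfa : Kf a = 2 * Real.log 2 := by
    rw [Kf, hexpa, hexpna, ha_def]
    have : (2:ℝ)⁻¹ - 1 = -(2⁻¹) := by norm_num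
    rw [this, Real.log_neg_eq_log, Real.log_inv]
    ring
  -- left integral = 0
  have left_eq : ∫ y in Ioc a 0, f y = 0 := by
    have step1 : ∫ y in Ioc a 0, f y = ∫ y in Ioc a 0, (g1 y + g3 y) := by
      apply setIntegral_congr_ae measurableSet_Ioc
      filter_upwards [hae] with y hy _
      exact f_eq hy
    rw [step1, ← intervalIntegral.integral_of_le ha0]
    have := intervalIntegral.integral_eq_sub_of_hasDeriv_right_of_le ha0
      (f := fun y => Hf y + Kf y) (f' := fun y => g1 y + g3 y)
      ((contH.add contK).continuousOn)
      (fun x hx => ((hH hx.2.ne).add (hK hx.2.ne)).hasDerivWithinAt)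
      (by
        rw [intervalIntegrable_iff_integrableOn_Ioc_of_le ha0]
        exact int_g1_left.add int_g3_left)
    rw [this]
    show Hf 0 + Kf 0 - (Hf a + Kf a) = 0
    rw [Hf0, Kf0, Hfa, Kfa]
    ring
  -- right integral = 2
  have right_eq : ∫ y in Ioi 0, f y = 2 := by
    have step1 : ∫ y in Ioi 0, f y = ∫ y in Ioi 0, (g1 y + g3 y) := by
      apply setIntegral_congr_ae measurableSet_Ioi
      filter_upwards [hae] with y hy _
      exact f_eq hy
    rw [step1]
    have := integral_Ioi_of_hasDerivAt_of_tendsto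
      (f := fun y => Hf y + Kf y) (f' := fun y => g1 y + g3 y) (a := 0) (m := 0)
      ((contH.add contK).continuousWithinAt)
      (fun x hx => (hH (ne_of_gt hx)).add (hK (ne_of_gt hx)))
      (int_g1_right.add int_g3_right)
      (by simpa using tendH_top.add tendK_top)
    rw [this]
    show (0:ℝ) - (Hf 0 + Kf 0) = 2
    rw [Hf0, Kf0]
    ring
  rw [left_eq, right_eq]
  norm_num
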